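/- If an indecomposable representation V of the leg-extended quiver Q_d has some non-injective leg arrow, then V contains a direct summand supported on a segment of one leg with all dimensions equal to 1; in particular the dimension vector of V is a real root (positive root of a type-A subdiagram). -/

import Mathlib

section QuiverDefs

variable {V A : Type} [Fintype V] [Fintype A] [DecidableEq V]

/-- The Euler form of the quiver with arrows `a : s a → t a`. -/
def eulerForm (s t : A → V) (d e : V → ℤ) : ℤ :=
  (∑ i, d i * e i) - ∑ a, d (s a) * e (t a)

/-- The symmetrized Euler form. -/
def symForm (s t : A → V) (d e : V → ℤ) : ℤ :=
  eulerForm s t d e + eulerForm s t e d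

/-- The simple reflection at vertex `i`. -/
def reflAt (s t : A → V) (i : V) (d : V → ℤ) : V → ℤ :=
  fun j => d j - symForm s t d (Pi.single i 1) * ((Pi.single i 1 : V → ℤ) j)

def adjacent (s t : A → V) (i j : V) : Prop :=
  ∃ a, (s a = i ∧ t a = j) ∨ (s a = j ∧ t a = i)

def connectedSupport (s t : A → V) (f : V → ℤ) : Prop :=
  ∀ i j, f i ≠ 0 → f j ≠ 0 →
    Relation.ReflTransGen (fun p q => adjacent s t p q ∧ f p ≠ 0 ∧ f q ≠ 0) i j

/-- Membership in the fundamental domain. -/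
def inFund (s t : A → V) (f : V → ℤ) : Prop :=
  f ≠ 0 ∧ (∀ i, 0 ≤ f i) ∧ connectedSupport s t f ∧
    ∀ i, symForm s t f (Pi.single i 1) ≤ 0

/-- Imaginary roots: Weyl group translates of the fundamental domain. -/
inductive IsImaginaryRoot (s t : A → V) : (V → ℤ) → Prop
  | fund (f) : inFund s t f → IsImaginaryRoot s t f
  | refl (i f) : IsImaginaryRoot s t f → IsImaginaryRoot s t (reflAt s t i f)

/-- Real roots: Weyl group translates of the coordinate vectors. -/
inductive IsRealRoot (s t : A → V) : (V → ℤ) → Prop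
  | simple (i : V) : IsRealRoot s t (Pi.single i 1)
  | refl (i f) : IsRealRoot s t f → IsRealRoot s t (reflAt s t i f)

variable (K : Type) [Field K]

/-- The representation space of the quiver at dimension vector `n`. -/
def QRepSp (s t : A → V) (n : V → ℕ) : Type :=
  ∀ a : A, Matrix (Fin (n (t a))) (Fin (n (s a))) K

def IsEndo (s t : A → V) {n : V → ℕ} (x : QRepSp K s t n)
    (φ : ∀ i, Matrix (Fin (n i)) (Fin (n i)) K) : Prop :=
  ∀ a, φ (t a) * x a = x a * φ (s a)

/-- A representation is indecomposable if it is nonzero and admits no nontrivial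
idempotent endomorphism. -/
def Indecomposable (s t : A → V) {n : V → ℕ} (x : QRepSp K s t n) : Prop :=
  (∃ i, n i ≠ 0) ∧
  ∀ φ, IsEndo K s t x φ → (∀ i, φ i * φ i = φ i) →
    (∀ i, φ i = 0) ∨ (∀ i, φ i = 1)

/-- Isomorphism of representations (same orbit of the base change group). -/
def IsIso (s t : A → V) {n : V → ℕ} (x y : QRepSp K s t n) : Prop :=
  ∃ g : ∀ i, (Matrix (Fin (n i)) (Fin (n i)) K)ˣ,
    ∀ a, (g (t a)).1 * x a = y a * (g (s a)).1

variable (s t : A → V)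

/-- Vertices of the leg-extended quiver `Q_d`: pairs `(i,k)`, where `k : Fin (d i)`
represents the vertex `(i, k+1)` of the paper. -/
abbrev LegVertex (d : V → ℕ) : Type := Σ i : V, Fin (d i)

/-- Leg arrows `β_{(i,k)} : (i,k) → (i,k+1)` of `Q_d`. -/
abbrev LegArrow (d : V → ℕ) : Type := Σ i : V, {k : Fin (d i) // (k : ℕ) + 1 < d i}

/-- The arrows of `Q_d` coming from arrows of `Q` (joining the tops of the legs). -/
abbrev OrigArrow (d : V → ℕ) : Type := {a : A // 0 < d (s a) ∧ 0 < d (t a)}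

/-- Arrows of the leg-extended quiver `Q_d`. -/
abbrev QdArrow (d : V → ℕ) : Type := LegArrow d ⊕ OrigArrow s t d

/-- Source map of `Q_d`. -/
def QdSrc (d : V → ℕ) : QdArrow s t d → LegVertex d
  | Sum.inl ⟨i, k, _⟩ => ⟨i, k⟩
  | Sum.inr ⟨a, h⟩ => ⟨s a, ⟨d (s a) - 1, by omega⟩⟩

/-- Target map of `Q_d`. -/
def QdTgt (d : V → ℕ) : QdArrow s t d → LegVertex d
  | Sum.inl ⟨i, k, h⟩ => ⟨i, ⟨(k : ℕ) + 1, h⟩⟩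
  | Sum.inr ⟨a, h⟩ => ⟨t a, ⟨d (t a) - 1, by omega⟩⟩

variable [DecidableEq A]

/-! ### Auxiliary material -/

section AuxGeneral

open Matrix

set_option linter.unusedSectionVars false

variable {K}

/-- Cast a matrix along equalities of the dimensions. -/
def castM {p q p' q' : ℕ} (hp : p = p') (hq : q = q')
    (M : Matrix (Fin p) (Fin q) K) : Matrix (Fin p') (Fin q') K :=
  Matrix.reindex (finCongr hp) (finCongr hq) M

@[simp] lemma castM_rfl {p q : ℕ} (M : Matrix (Fin p) (Fin q) K) :
    castM rfl rfl M = M := by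
  simp [castM]

lemma castM_mul {p p' q q' r r' : ℕ} (hp : p = p') (hq hq2 : q = q') (hr : r = r')
    (M : Matrix (Fin p) (Fin q) K) (N : Matrix (Fin q) (Fin r) K) :
    castM hp hq M * castM hq2 hr N = castM hp hr (M * N) := by
  subst hp; subst hq; subst hr; simp

@[simp] lemma castM_zero {p q p' q' : ℕ} (hp : p = p') (hq : q = q') :
    castM hp hq (0 : Matrix (Fin p) (Fin q) K) = 0 := by
  subst hp; subst hq; simp

lemma castM_eq_zero_iff {p q p' q' : ℕ} (hp : p = p') (hq : q = q')
    (M : Matrix (Fin p) (Fin q) K) : castM hp hq M = 0 ↔ M = 0 := by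
  subst hp; subst hq; simp

lemma castM_eq_one_iff {p p' : ℕ} (hp hp2 : p = p')
    (M : Matrix (Fin p) (Fin p) K) : castM hp hp2 M = 1 ↔ M = 1 := by
  subst hp; simp

lemma castM_mulVec {p p' q q' : ℕ} (hp : p = p') (hq : q = q')
    (M : Matrix (Fin p) (Fin q) K) (v : Fin q' → K) :
    castM hp hq M *ᵥ v = (M *ᵥ (v ∘ finCongr hq)) ∘ (finCongr hp).symm := by
  subst hp; subst hq; simp

lemma vecMulVec_mul_matrix {p q r : ℕ} (a : Fin p → K) (b : Fin q → K)
    (M : Matrix (Fin q) (Fin r) K) :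
    Matrix.vecMulVec a b * M = Matrix.vecMulVec a (b ᵥ* M) := by
  ext i j
  simp [Matrix.mul_apply, Matrix.vecMulVec_apply, Matrix.vecMul, dotProduct,
    Finset.mul_sum, mul_assoc]

lemma matrix_mul_vecMulVec {p q r : ℕ} (a : Fin q → K) (b : Fin r → K)
    (M : Matrix (Fin p) (Fin q) K) :
    M * Matrix.vecMulVec a b = Matrix.vecMulVec (M *ᵥ a) b := by
  ext i j
  simp [Matrix.mul_apply, Matrix.vecMulVec_apply, Matrix.mulVec, dotProduct,
    Finset.sum_mul, mul_assoc]

lemma vecMulVec_mul_vecMulVec {p q r : ℕ} (a : Fin p → K) (b c : Fin q → K)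
    (e : Fin r → K) :
    Matrix.vecMulVec a b * Matrix.vecMulVec c e = (b ⬝ᵥ c) • Matrix.vecMulVec a e := by
  ext i j
  simp [Matrix.mul_apply, Matrix.vecMulVec_apply, dotProduct,
    Finset.sum_mul, Finset.mul_sum]
  exact Finset.sum_congr rfl fun z _ => by ring

lemma exists_dual_vec {ι : Type} [Fintype ι] [DecidableEq ι]
    (W : Submodule K (ι → K)) (v : ι → K) (hv : v ∉ W) :
    ∃ ξ : ι → K, ξ ⬝ᵥ v = 1 ∧ ∀ w ∈ W, ξ ⬝ᵥ w = 0 := by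
  obtain ⟨f, hf0, hfW⟩ := W.exists_dual_map_eq_bot_of_notMem hv inferInstance
  have key : ∀ (g : Module.Dual K (ι → K)) (w : ι → K),
      (fun q => g (Pi.single q 1)) ⬝ᵥ w = g w := by
    intro g w
    have : w = ∑ q, w q • (Pi.single q (1 : K) : ι → K) := by
      ext r
      simp [Pi.single_apply]
    conv_rhs => rw [this]
    rw [map_sum]
    simp [dotProduct, mul_comm]
  refine ⟨fun q => ((f v)⁻¹ • f) (Pi.single q 1), ?_, ?_⟩
  · rw [key ((f v)⁻¹ • f) v]
    simp [inv_mul_cancel₀ hf0]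
  · intro w hw
    rw [key ((f v)⁻¹ • f) w]
    have : f w = 0 := by
      have : f w ∈ W.map f := Submodule.mem_map_of_mem hw
      rw [hfW] at this
      simpa using this
    simp [this]

@[simp] lemma vecMulVec_zero' {p q : ℕ} (a : Fin p → K) :
    Matrix.vecMulVec a (0 : Fin q → K) = 0 := by
  ext i j; simp [Matrix.vecMulVec_apply]

@[simp] lemma zero_vecMulVec' {p q : ℕ} (b : Fin q → K) :
    Matrix.vecMulVec (0 : Fin p → K) b = 0 := by
  ext i j; simp [Matrix.vecMulVec_apply]

lemma vecMulVec_eq_one {m : ℕ} (a b : Fin m → K)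
    (h : Matrix.vecMulVec a b = 1) (hd : b ⬝ᵥ a = 1) : m = 1 := by
  match m with
  | 0 => exact absurd hd (by simp [dotProduct])
  | 1 => rfl
  | (mm+2) =>
      exfalso
      have h00 := congrFun (congrFun h 0) 0
      have h11 := congrFun (congrFun h 1) 1
      have h01 := congrFun (congrFun h 0) 1
      simp [Matrix.vecMulVec_apply, Matrix.one_apply] at h00 h11 h01
      exact h01.elim (left_ne_zero_of_mul_eq_one h00) (right_ne_zero_of_mul_eq_one h11)

end AuxGeneral

section AuxLeg

open Matrix

set_option linter.unusedSectionVars false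

variable (d : V → ℕ) (n : LegVertex d → ℕ)

/-- The dimension at level `j` of the leg at `i`, extended by `0`. -/
def legDim (i : V) (j : ℕ) : ℕ := if h : j < d i then n ⟨i, ⟨j, h⟩⟩ else 0

lemma legDim_eq {i : V} {j : ℕ} (h : j < d i) :
    legDim d n i j = n ⟨i, ⟨j, h⟩⟩ := dif_pos h

lemma legDim_eq' (i : V) (w : LegVertex d) (h : w.1 = i) :
    legDim d n i (w.2 : ℕ) = n w := by
  obtain ⟨i', κ⟩ := w
  dsimp at h
  subst h
  exact legDim_eq d n κ.2

lemma legDim_eq_zero {i : V} {j : ℕ} (h : ¬ j < d i) :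
    legDim d n i j = 0 := dif_neg h

variable (x : QRepSp K (QdSrc s t d) (QdTgt s t d) n)

/-- The leg matrices, extended by `0`. -/
def legB (i : V) (j : ℕ) :
    Matrix (Fin (legDim d n i (j+1))) (Fin (legDim d n i j)) K :=
  if h : j + 1 < d i then
    castM (legDim_eq d n h).symm (legDim_eq d n (Nat.lt_of_succ_lt h)).symm
      (x (Sum.inl ⟨i, ⟨⟨j, Nat.lt_of_succ_lt h⟩, h⟩⟩))
  else 0

/-- Composites of leg matrices: `legCm i a b` is the composite from level `a`
to level `b` (the identity for `b = a`, junk for `b < a`). -/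
def legCm (i : V) (a : ℕ) : (b : ℕ) →
    Matrix (Fin (legDim d n i b)) (Fin (legDim d n i a)) K
  | 0 => if h : 0 = a then castM rfl (congrArg (legDim d n i) h) 1 else 0
  | (b+1) => if h : b + 1 = a then castM rfl (congrArg (legDim d n i) h) 1
      else legB K s t d n x i b * legCm i a b

lemma legCm_self (i : V) (a : ℕ) : legCm K s t d n x i a a = 1 := by
  cases a with
  | zero => simp [legCm]
  | succ b => simp [legCm]

lemma legCm_succ (i : V) {a b : ℕ} (h : a ≤ b) :
    legCm K s t d n x i a (b+1) = legB K s t d n x i b * legCm K s t d n x i a b := by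
  rw [legCm, dif_neg (by omega)]

lemma legCm_comp (i : V) {a b c : ℕ} (hab : a ≤ b) (hbc : b ≤ c) :
    legCm K s t d n x i a c = legCm K s t d n x i b c * legCm K s t d n x i a b := by
  induction c, hbc using Nat.le_induction with
  | base => rw [legCm_self, Matrix.one_mul]
  | succ c hbc ih =>
      rw [legCm_succ K s t d n x i (hab.trans hbc), legCm_succ K s t d n x i hbc, ih,
        Matrix.mul_assoc]

lemma legCm_one (i : V) (a : ℕ) :
    legCm K s t d n x i a (a+1) = legB K s t d n x i a := by
  rw [legCm_succ K s t d n x i le_rfl, legCm_self, Matrix.mul_one]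

variable (i : V) (l k : ℕ) (u : Fin (legDim d n i l) → K) (ξ : Fin (legDim d n i k) → K)

/-- The distinguished vector at level `j`. -/
def segV (j : ℕ) : Fin (legDim d n i j) → K := legCm K s t d n x i l j *ᵥ u

/-- The distinguished covector at level `j`. -/
def segXi (j : ℕ) : Fin (legDim d n i j) → K := ξ ᵥ* legCm K s t d n x i j k

/-- The idempotent at level `j`. -/
def segPsi (j : ℕ) : Matrix (Fin (legDim d n i j)) (Fin (legDim d n i j)) K :=
  if l ≤ j ∧ j ≤ k then
    Matrix.vecMulVec (segV K s t d n x i l u j) (segXi K s t d n x i k ξ j) else 0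

/-- The idempotent endomorphism of the representation. -/
def segPhi (w : LegVertex d) : Matrix (Fin (n w)) (Fin (n w)) K :=
  if h : w.1 = i then
    castM (legDim_eq' d n i w h) (legDim_eq' d n i w h)
      (segPsi K s t d n x i l k u ξ (w.2 : ℕ))
  else 0

lemma segPsi_comm (hlk : l ≤ k)
    (hxi0 : l ≠ 0 → ξ ᵥ* legCm K s t d n x i (l-1) k = 0)
    (hker : legB K s t d n x i k *ᵥ (legCm K s t d n x i l k *ᵥ u) = 0)
    (j : ℕ) :
    segPsi K s t d n x i l k u ξ (j+1) * legB K s t d n x i j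
      = legB K s t d n x i j * segPsi K s t d n x i l k u ξ j := by
  by_cases h1 : l ≤ j + 1 ∧ j + 1 ≤ k
  · by_cases h2 : l ≤ j
    · have hjk : j ≤ k := by omega
      have hv : legB K s t d n x i j *ᵥ segV K s t d n x i l u j
          = segV K s t d n x i l u (j+1) := by
        rw [segV, segV, mulVec_mulVec, ← legCm_succ K s t d n x i h2]
      have hx : segXi K s t d n x i k ξ (j+1) ᵥ* legB K s t d n x i j
          = segXi K s t d n x i k ξ j := by
        rw [segXi, segXi, vecMul_vecMul, ← legCm_one K s t d n x i j,
          ← legCm_comp K s t d n x i (Nat.le_succ j) h1.2]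
      rw [segPsi, if_pos h1, segPsi, if_pos ⟨h2, hjk⟩,
        vecMulVec_mul_matrix, matrix_mul_vecMulVec, hv, hx]
    · have hj1 : j + 1 = l := by omega
      rw [segPsi, if_pos h1, segPsi, if_neg (by omega), Matrix.mul_zero,
        vecMulVec_mul_matrix]
      have : segXi K s t d n x i k ξ (j+1) ᵥ* legB K s t d n x i j = 0 := by
        rw [segXi, vecMul_vecMul]
        have hc : legCm K s t d n x i (j+1) k * legB K s t d n x i j
            = legCm K s t d n x i j k := by
          rw [legCm_comp K s t d n x i (Nat.le_succ j) h1.2, legCm_one]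
        rw [hc]
        have := hxi0 (by omega)
        rwa [show l - 1 = j by omega] at this
      rw [this, vecMulVec_zero']
  · by_cases h2 : l ≤ j ∧ j ≤ k
    · have hj : j = k := by omega
      subst hj
      rw [segPsi, if_neg h1, segPsi, if_pos h2, Matrix.zero_mul, matrix_mul_vecMulVec]
      rw [segV, hker, zero_vecMulVec']
    · rw [segPsi, if_neg h1, segPsi, if_neg h2, Matrix.zero_mul, Matrix.mul_zero]

lemma segPsi_idem (hdot : ξ ⬝ᵥ (legCm K s t d n x i l k *ᵥ u) = 1) (j : ℕ) :
    segPsi K s t d n x i l k u ξ j * segPsi K s t d n x i l k u ξ j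
      = segPsi K s t d n x i l k u ξ j := by
  rw [segPsi]
  split_ifs with h
  · rw [_root_.vecMulVec_mul_vecMulVec]
    have hd : segXi K s t d n x i k ξ j ⬝ᵥ segV K s t d n x i l u j = 1 := by
      rw [segXi, segV, ← dotProduct_mulVec, mulVec_mulVec,
        ← legCm_comp K s t d n x i h.1 h.2, hdot]
    rw [hd, one_smul]
  · simp

lemma castM_castM_symm {p p' q q' : ℕ} (hp : p = p') (hq : q = q')
    (M : Matrix (Fin p') (Fin q') K) :
    castM hp hq (castM hp.symm hq.symm M) = M := by
  subst hp; subst hq; simp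

lemma legB_eq {i : V} {j : ℕ} (h : j + 1 < d i) :
    x (Sum.inl ⟨i, ⟨⟨j, Nat.lt_of_succ_lt h⟩, h⟩⟩)
      = castM (legDim_eq d n h) (legDim_eq d n (Nat.lt_of_succ_lt h))
          (legB K s t d n x i j) := by
  rw [legB, dif_pos h]
  exact (castM_castM_symm K _ _ _).symm

lemma segPhi_eq_zero (w : LegVertex d)
    (hw : ¬(w.1 = i ∧ l ≤ (w.2 : ℕ) ∧ (w.2 : ℕ) ≤ k)) :
    segPhi K s t d n x i l k u ξ w = 0 := by
  rw [segPhi]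
  split_ifs with h
  · rw [segPsi, if_neg (fun hc => hw ⟨h, hc⟩), castM_zero]
  · rfl

lemma segPhi_apply (w : LegVertex d) (h : w.1 = i) :
    segPhi K s t d n x i l k u ξ w
      = castM (legDim_eq' d n i w h) (legDim_eq' d n i w h)
          (segPsi K s t d n x i l k u ξ (w.2 : ℕ)) := by
  rw [segPhi, dif_pos h]

lemma segPhi_isEndo (hlk : l ≤ k) (hk2 : k + 1 < d i)
    (hxi0 : l ≠ 0 → ξ ᵥ* legCm K s t d n x i (l-1) k = 0)
    (hker : legB K s t d n x i k *ᵥ (legCm K s t d n x i l k *ᵥ u) = 0) :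
    IsEndo K (QdSrc s t d) (QdTgt s t d) x (segPhi K s t d n x i l k u ξ) := by
  rintro (⟨i', κ, hκ⟩ | ⟨a0, ha⟩)
  · by_cases hi : i' = i
    · subst hi
      have hxa : x (Sum.inl ⟨i', κ, hκ⟩)
          = castM (legDim_eq d n hκ) (legDim_eq d n (Nat.lt_of_succ_lt hκ))
              (legB K s t d n x i' (κ : ℕ)) := legB_eq K s t d n x hκ
      have htgt : segPhi K s t d n x i' l k u ξ (QdTgt s t d (Sum.inl ⟨i', κ, hκ⟩))
          = castM (legDim_eq d n hκ) (legDim_eq d n hκ)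
              (segPsi K s t d n x i' l k u ξ ((κ : ℕ) + 1)) :=
        segPhi_apply K s t d n x i' l k u ξ _ rfl
      have hsrc : segPhi K s t d n x i' l k u ξ (QdSrc s t d (Sum.inl ⟨i', κ, hκ⟩))
          = castM (legDim_eq d n (Nat.lt_of_succ_lt hκ)) (legDim_eq d n (Nat.lt_of_succ_lt hκ))
              (segPsi K s t d n x i' l k u ξ (κ : ℕ)) :=
        segPhi_apply K s t d n x i' l k u ξ _ rfl
      rw [hxa, htgt, hsrc]
      refine (castM_mul _ _ _ _ _ _).trans (Eq.trans ?_ (castM_mul _ _ _ _ _ _).symm)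
      exact congrArg _ (segPsi_comm K s t d n x i' l k u ξ hlk hxi0 hker (κ : ℕ))
    · have h1 : segPhi K s t d n x i l k u ξ (QdTgt s t d (Sum.inl ⟨i', κ, hκ⟩)) = 0 :=
        segPhi_eq_zero K s t d n x i l k u ξ _ (fun hc => hi hc.1)
      have h2 : segPhi K s t d n x i l k u ξ (QdSrc s t d (Sum.inl ⟨i', κ, hκ⟩)) = 0 :=
        segPhi_eq_zero K s t d n x i l k u ξ _ (fun hc => hi hc.1)
      rw [h1, h2, Matrix.zero_mul, Matrix.mul_zero]
  · have h1 : segPhi K s t d n x i l k u ξ (QdTgt s t d (Sum.inr ⟨a0, ha⟩)) = 0 := by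
      apply segPhi_eq_zero
      rintro ⟨hc1, hc2, hc3⟩
      dsimp [QdTgt] at hc1 hc2 hc3
      subst hc1
      omega
    have h2 : segPhi K s t d n x i l k u ξ (QdSrc s t d (Sum.inr ⟨a0, ha⟩)) = 0 := by
      apply segPhi_eq_zero
      rintro ⟨hc1, hc2, hc3⟩
      dsimp [QdSrc] at hc1 hc2 hc3
      subst hc1
      omega
    rw [h1, h2, Matrix.zero_mul, Matrix.mul_zero]

lemma segPhi_idem (hdot : ξ ⬝ᵥ (legCm K s t d n x i l k *ᵥ u) = 1) (w : LegVertex d) :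
    segPhi K s t d n x i l k u ξ w * segPhi K s t d n x i l k u ξ w
      = segPhi K s t d n x i l k u ξ w := by
  rw [segPhi]
  split_ifs with h
  · rw [castM_mul, segPsi_idem K s t d n x i l k u ξ hdot]
  · simp

lemma segPhi_ne_zero (hlk : l ≤ k) (hkd : k < d i)
    (hdot : ξ ⬝ᵥ (legCm K s t d n x i l k *ᵥ u) = 1) :
    segPhi K s t d n x i l k u ξ ⟨i, ⟨k, hkd⟩⟩ ≠ 0 := by
  intro h0
  rw [segPhi_apply K s t d n x i l k u ξ _ rfl, castM_eq_zero_iff] at h0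
  have hd : segXi K s t d n x i k ξ k ⬝ᵥ segV K s t d n x i l u k = 1 := by
    rw [segXi, segV, ← dotProduct_mulVec, mulVec_mulVec,
      ← legCm_comp K s t d n x i hlk le_rfl, hdot]
  rw [segPsi, if_pos ⟨hlk, le_rfl⟩] at h0
  rw [show segXi K s t d n x i k ξ k ⬝ᵥ segV K s t d n x i l u k = 0 from ?_] at hd
  · exact one_ne_zero hd.symm
  · have : ∀ p q, segV K s t d n x i l u k p * segXi K s t d n x i k ξ k q = 0 := by
      intro p q
      have := congrFun (congrFun h0 p) q
      simpa [Matrix.vecMulVec_apply] using this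
    simp only [dotProduct]
    refine Finset.sum_eq_zero fun q _ => ?_
    rw [mul_comm]
    exact this q q

lemma single_seg_eq (i : V) (l : ℕ) (hl : l < d i) :
    (Pi.single (M := fun _ : LegVertex d => ℤ) ⟨i, ⟨l, hl⟩⟩ 1)
      = fun w : LegVertex d =>
          if w.1 = i ∧ l ≤ (w.2 : ℕ) ∧ (w.2 : ℕ) ≤ l then 1 else 0 := by
  funext w
  obtain ⟨i', κ⟩ := w
  rw [Pi.single_apply]
  by_cases hi : i' = i
  · subst hi
    simp only [Sigma.mk.inj_iff, heq_eq_eq, Fin.ext_iff, true_and]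
    split_ifs <;> simp_all <;> try omega
  · simp only [Sigma.mk.inj_iff, hi, false_and, if_false]
    try simp [hi]

lemma symForm_seg (i : V) (l k : ℕ) (hlk : l ≤ k) (hk1 : k + 1 < d i) (hk2 : k + 2 < d i) :
    symForm (QdSrc s t d) (QdTgt s t d)
      (fun w : LegVertex d =>
        if w.1 = i ∧ l ≤ (w.2 : ℕ) ∧ (w.2 : ℕ) ≤ k then 1 else 0)
      (Pi.single (⟨i, ⟨k+1, hk1⟩⟩ : LegVertex d) 1) = -1 := by
  have hkd : k < d i := by omega
  set f : LegVertex d → ℤ := fun w =>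
    if w.1 = i ∧ l ≤ (w.2 : ℕ) ∧ (w.2 : ℕ) ≤ k then 1 else 0 with hf
  set p : LegVertex d := ⟨i, ⟨k+1, hk1⟩⟩ with hp
  have hfp : f p = 0 := by
    rw [hf]
    simp only [hp]
    rw [if_neg]
    rintro ⟨-, -, hc⟩
    have hc' : k + 1 ≤ k := hc
    all_goals omega
  have hsum1 : ∑ w, f w * Pi.single (M := fun _ : LegVertex d => ℤ) p 1 w = 0 := by
    simp only [Pi.single_apply, mul_ite, mul_one, mul_zero]
    rw [Finset.sum_ite_eq' Finset.univ p f]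
    simp [hfp]
  have hsum2 : ∑ w, Pi.single (M := fun _ : LegVertex d => ℤ) p 1 w * f w = 0 := by
    simp only [Pi.single_apply, ite_mul, one_mul, zero_mul]
    rw [Finset.sum_ite_eq' Finset.univ p f]
    simp [hfp]
  have hinr1 : ∀ b : OrigArrow s t d,
      Pi.single (M := fun _ : LegVertex d => ℤ) p 1 (QdTgt s t d (Sum.inr b)) = 0 := by
    rintro ⟨a0, ha⟩
    rw [Pi.single_apply, if_neg]
    intro hc
    rw [QdTgt, hp] at hc
    obtain ⟨hc1, hc2⟩ := Sigma.mk.inj_iff.1 hc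
    subst hc1
    rw [heq_eq_eq, Fin.ext_iff] at hc2
    simp at hc2
    omega
  have hinr2 : ∀ b : OrigArrow s t d,
      Pi.single (M := fun _ : LegVertex d => ℤ) p 1 (QdSrc s t d (Sum.inr b)) = 0 := by
    rintro ⟨a0, ha⟩
    rw [Pi.single_apply, if_neg]
    intro hc
    rw [QdSrc, hp] at hc
    obtain ⟨hc1, hc2⟩ := Sigma.mk.inj_iff.1 hc
    subst hc1
    rw [heq_eq_eq, Fin.ext_iff] at hc2
    simp at hc2
    omega
  have harr1 : ∑ a : QdArrow s t d,
      f (QdSrc s t d a) * Pi.single (M := fun _ : LegVertex d => ℤ) p 1 (QdTgt s t d a) = 1 := by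
    rw [Fintype.sum_sum_type]
    have h2 : ∑ b : OrigArrow s t d,
        f (QdSrc s t d (Sum.inr b)) * Pi.single (M := fun _ : LegVertex d => ℤ) p 1 (QdTgt s t d (Sum.inr b)) = 0 :=
      Finset.sum_eq_zero fun b _ => by rw [hinr1 b, mul_zero]
    have h1 : ∑ la : LegArrow d,
        f (QdSrc s t d (Sum.inl la)) * Pi.single (M := fun _ : LegVertex d => ℤ) p 1 (QdTgt s t d (Sum.inl la)) = 1 := by
      rw [Finset.sum_eq_single (⟨i, ⟨⟨k, hkd⟩, hk1⟩⟩ : LegArrow d)]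
      · have e1 : (QdTgt s t d (Sum.inl (⟨i, ⟨⟨k, hkd⟩, hk1⟩⟩ : LegArrow d))) = p := rfl
        have e2 : (QdSrc s t d (Sum.inl (⟨i, ⟨⟨k, hkd⟩, hk1⟩⟩ : LegArrow d)))
            = (⟨i, ⟨k, hkd⟩⟩ : LegVertex d) := rfl
        rw [e1, e2, Pi.single_apply, if_pos rfl, mul_one, hf]
        simp [hlk]
      · rintro ⟨i₁, κ₁, h₁⟩ - hne
        rw [QdTgt, Pi.single_apply, if_neg, mul_zero]
        intro hc
        rw [hp] at hc
        obtain ⟨hc1, hc2⟩ := Sigma.mk.inj_iff.1 hc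
        subst hc1
        rw [heq_eq_eq, Fin.ext_iff] at hc2
        simp only [Fin.val_mk] at hc2
        apply hne
        have : (κ₁ : ℕ) = k := by omega
        congr 1
        exact Subtype.ext (Fin.ext this)
      · intro hmem
        exact absurd (Finset.mem_univ _) hmem
    rw [h1, h2, add_zero]
  have harr2 : ∑ a : QdArrow s t d,
      Pi.single (M := fun _ : LegVertex d => ℤ) p 1 (QdSrc s t d a) * f (QdTgt s t d a) = 0 := by
    rw [Fintype.sum_sum_type]
    have h2 : ∑ b : OrigArrow s t d,
        Pi.single (M := fun _ : LegVertex d => ℤ) p 1 (QdSrc s t d (Sum.inr b)) * f (QdTgt s t d (Sum.inr b)) = 0 :=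
      Finset.sum_eq_zero fun b _ => by rw [hinr2 b, zero_mul]
    have h1 : ∑ la : LegArrow d,
        Pi.single (M := fun _ : LegVertex d => ℤ) p 1 (QdSrc s t d (Sum.inl la)) * f (QdTgt s t d (Sum.inl la)) = 0 := by
      rw [Finset.sum_eq_single (⟨i, ⟨⟨k+1, hk1⟩, hk2⟩⟩ : LegArrow d)]
      · have e0 : (QdSrc s t d (Sum.inl (⟨i, ⟨⟨k+1, hk1⟩, hk2⟩⟩ : LegArrow d))) = p := rfl
        have e1 : (QdTgt s t d (Sum.inl (⟨i, ⟨⟨k+1, hk1⟩, hk2⟩⟩ : LegArrow d)))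
            = (⟨i, ⟨k+2, hk2⟩⟩ : LegVertex d) := rfl
        rw [e0, e1, Pi.single_apply, if_pos rfl, one_mul, hf]
        dsimp only
        split_ifs with hcc
        · exact absurd hcc.2.2 (by omega)
        · rfl
      · rintro ⟨i₁, κ₁, h₁⟩ - hne
        rw [QdSrc, Pi.single_apply, if_neg, zero_mul]
        intro hc
        rw [hp] at hc
        obtain ⟨hc1, hc2⟩ := Sigma.mk.inj_iff.1 hc
        subst hc1
        rw [heq_eq_eq, Fin.ext_iff] at hc2
        simp only [Fin.val_mk] at hc2
        apply hne
        congr 1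
        exact Subtype.ext (Fin.ext hc2)
      · intro hmem
        exact absurd (Finset.mem_univ _) hmem
    rw [h1, h2, add_zero]
  rw [symForm, eulerForm, eulerForm, hsum1, hsum2, harr1, harr2]
  ring

lemma isRealRoot_seg (i : V) (l k : ℕ) (hlk : l ≤ k) (hk2 : k + 1 < d i) :
    IsRealRoot (QdSrc s t d) (QdTgt s t d)
      (fun w : LegVertex d =>
        if w.1 = i ∧ l ≤ (w.2 : ℕ) ∧ (w.2 : ℕ) ≤ k then 1 else 0) := by
  revert hk2
  induction k, hlk using Nat.le_induction with
  | base =>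
      intro hk2
      rw [← single_seg_eq d i l (by omega)]
      exact IsRealRoot.simple _
  | succ m hm ih =>
      intro hk2
      have hroot := ih (by omega)
      have hkey := IsRealRoot.refl (⟨i, ⟨m+1, by omega⟩⟩ : LegVertex d) _ hroot
      have hEq : (fun w : LegVertex d =>
          if w.1 = i ∧ l ≤ (w.2 : ℕ) ∧ (w.2 : ℕ) ≤ m + 1 then (1:ℤ) else 0)
          = reflAt (QdSrc s t d) (QdTgt s t d) (⟨i, ⟨m+1, by omega⟩⟩ : LegVertex d)
            (fun w : LegVertex d =>
              if w.1 = i ∧ l ≤ (w.2 : ℕ) ∧ (w.2 : ℕ) ≤ m then 1 else 0) := by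
        have hsf := symForm_seg s t d i l m hm (by omega) (by omega)
        funext w
        simp only [reflAt]
        rw [hsf]
        obtain ⟨i', κ⟩ := w
        rw [Pi.single_apply]
        by_cases hi : i' = i
        · subst hi
          simp only [Sigma.mk.inj_iff, heq_eq_eq, Fin.ext_iff, true_and, Fin.val_mk]
          split_ifs <;> simp_all <;> try omega
        · simp only [Sigma.mk.inj_iff, hi, false_and, if_false]
          simp [hi]
      rw [hEq]
      exact hkey



end AuxLeg

open Matrix

/-- If an indecomposable representation `x` of the leg-extended quiver `Q_d` has
some non-injective leg arrow, then (being indecomposable) it is a representation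
supported on a segment of one leg with all dimensions equal to `1`; in particular
its dimension vector is a real root (a positive root of a type-`A` subdiagram).
(Here `k : Fin (d i)` encodes the paper's vertex `(i, k+1)`.) -/
theorem indecomposable_noninjective_leg
    (d : V → ℕ) (n : LegVertex d → ℕ)
    (x : QRepSp K (QdSrc s t d) (QdTgt s t d) n)
    (hind : Indecomposable K (QdSrc s t d) (QdTgt s t d) x)
    (hninj : ∃ l : LegArrow d, ¬ Function.Injective ((x (Sum.inl l)).mulVec)) :
    ∃ (i : V) (l k : ℕ), l ≤ k ∧ k < d i ∧
      (∀ w : LegVertex d,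
        n w = if w.1 = i ∧ l ≤ (w.2 : ℕ) ∧ (w.2 : ℕ) ≤ k then 1 else 0) ∧
      IsRealRoot (QdSrc s t d) (QdTgt s t d) (fun w => (n w : ℤ)) := by
  classical
  obtain ⟨⟨i, κ₀, hκ₀⟩, hninjl⟩ := hninj
  rw [Function.not_injective_iff] at hninjl
  obtain ⟨va, vb, hvab, hvne⟩ := hninjl
  have hE : legDim d n i (κ₀ : ℕ) = n ⟨i, κ₀⟩ := legDim_eq d n κ₀.isLt
  set v' : Fin (legDim d n i (κ₀ : ℕ)) → K := fun q => (va - vb) (finCongr hE q) with hv'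
  have hv'ne : v' ≠ 0 := by
    intro h0
    apply hvne
    have hz : va - vb = 0 := by
      funext pp
      have := congrFun h0 ((finCongr hE).symm pp)
      exact (congrArg (va - vb) (Equiv.apply_symm_apply (finCongr hE) pp)).symm.trans this
    exact sub_eq_zero.1 hz
  have hM0 : x (Sum.inl ⟨i, κ₀, hκ₀⟩) *ᵥ (va - vb) = 0 := by
    rw [Matrix.mulVec_sub, hvab, sub_self]
  have hBk : legB K s t d n x i (κ₀ : ℕ) *ᵥ v' = 0 := by
    have hxa : x (Sum.inl ⟨i, κ₀, hκ₀⟩)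
        = castM (legDim_eq d n hκ₀) hE (legB K s t d n x i (κ₀ : ℕ)) :=
      legB_eq K s t d n x hκ₀
    rw [hxa] at hM0
    have hM2 : (legB K s t d n x i (κ₀ : ℕ) *ᵥ ((va - vb) ∘ finCongr hE))
        ∘ (finCongr (legDim_eq d n hκ₀)).symm = 0 :=
      (castM_mulVec _ _ _ _).symm.trans hM0
    funext r
    have := congrFun hM2 (finCongr (legDim_eq d n hκ₀) r)
    exact (congrArg (legB K s t d n x i (κ₀ : ℕ) *ᵥ v')
      ((finCongr (legDim_eq d n hκ₀)).symm_apply_apply r)).symm.trans this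
  set P : ℕ → Prop := fun j =>
    ∃ uu : Fin (legDim d n i j) → K, legCm K s t d n x i j (κ₀ : ℕ) *ᵥ uu = v' with hP
  have hPk : P (κ₀ : ℕ) := ⟨v', by rw [legCm_self]; exact Matrix.one_mulVec v'⟩
  set l : ℕ := Nat.find ⟨(κ₀ : ℕ), hPk⟩ with hldef
  obtain ⟨u, hu⟩ : P l := Nat.find_spec ⟨(κ₀ : ℕ), hPk⟩
  have hlk : l ≤ (κ₀ : ℕ) := Nat.find_le hPk
  have hlmin : ∀ m < l, ¬ P m := fun m hm => Nat.find_min _ hm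
  have hξex : ∃ ξ : Fin (legDim d n i (κ₀ : ℕ)) → K,
      ξ ⬝ᵥ v' = 1 ∧ (l ≠ 0 → ξ ᵥ* legCm K s t d n x i (l-1) (κ₀ : ℕ) = 0) := by
    by_cases hl0 : l = 0
    · obtain ⟨ξ, h1, _⟩ := exists_dual_vec (⊥ : Submodule K _) v' (by simpa using hv'ne)
      exact ⟨ξ, h1, fun h => absurd hl0 h⟩
    · have hvW : v' ∉ LinearMap.range
          (Matrix.mulVecLin (legCm K s t d n x i (l-1) (κ₀ : ℕ))) := by
        rintro ⟨uu, huu⟩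
        exact hlmin (l-1) (by omega) ⟨uu, by simpa [Matrix.mulVecLin_apply] using huu⟩
      obtain ⟨ξ, h1, h2⟩ := exists_dual_vec _ v' hvW
      refine ⟨ξ, h1, fun _ => ?_⟩
      funext q
      have h3 := h2 (Matrix.mulVecLin
        (legCm K s t d n x i (l-1) (κ₀ : ℕ)) (Pi.single q 1)) ⟨_, rfl⟩
      rw [Matrix.mulVecLin_apply, Matrix.dotProduct_mulVec] at h3
      simpa using h3
  obtain ⟨ξ, hξv, hξ0⟩ := hξex
  have hdot : ξ ⬝ᵥ (legCm K s t d n x i l (κ₀ : ℕ) *ᵥ u) = 1 := by rw [hu]; exact hξv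
  have hker' : legB K s t d n x i (κ₀ : ℕ) *ᵥ (legCm K s t d n x i l (κ₀ : ℕ) *ᵥ u) = 0 := by
    rw [hu]; exact hBk
  rcases hind.2 (segPhi K s t d n x i l (κ₀ : ℕ) u ξ)
      (segPhi_isEndo K s t d n x i l (κ₀ : ℕ) u ξ hlk hκ₀ hξ0 hker')
      (segPhi_idem K s t d n x i l (κ₀ : ℕ) u ξ hdot) with h0 | h1
  · exact absurd (h0 ⟨i, ⟨(κ₀ : ℕ), κ₀.isLt⟩⟩)
      (segPhi_ne_zero K s t d n x i l (κ₀ : ℕ) u ξ hlk κ₀.isLt hdot)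
  · have hn : ∀ w : LegVertex d,
        n w = if w.1 = i ∧ l ≤ (w.2 : ℕ) ∧ (w.2 : ℕ) ≤ (κ₀ : ℕ) then 1 else 0 := by
      intro w
      by_cases hw : w.1 = i
      · have hphi := h1 w
        rw [segPhi_apply K s t d n x i l (κ₀ : ℕ) u ξ w hw, castM_eq_one_iff] at hphi
        by_cases hseg : l ≤ (w.2 : ℕ) ∧ (w.2 : ℕ) ≤ (κ₀ : ℕ)
        · rw [if_pos ⟨hw, hseg⟩]
          rw [segPsi, if_pos hseg] at hphi
          have hdd : segXi K s t d n x i (κ₀ : ℕ) ξ (w.2 : ℕ)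
              ⬝ᵥ segV K s t d n x i l u (w.2 : ℕ) = 1 := by
            rw [segXi, segV, ← Matrix.dotProduct_mulVec, Matrix.mulVec_mulVec,
              ← legCm_comp K s t d n x i hseg.1 hseg.2, hdot]
          rw [← legDim_eq' d n i w hw]
          exact vecMulVec_eq_one _ _ hphi hdd
        · rw [if_neg (fun hc => hseg ⟨hc.2.1, hc.2.2⟩)]
          rw [segPsi, if_neg hseg] at hphi
          by_contra hnw
          have hpos : 0 < legDim d n i (w.2 : ℕ) := by
            rw [legDim_eq' d n i w hw]; omega
          have hcc := congrFun (congrFun hphi ⟨0, hpos⟩) ⟨0, hpos⟩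
          simp [Matrix.one_apply] at hcc
      · have hphi' := (segPhi_eq_zero K s t d n x i l (κ₀ : ℕ) u ξ w
          (fun hc => hw hc.1)).symm.trans (h1 w)
        rw [if_neg (fun hc => hw hc.1)]
        by_contra hnw
        have hpos : 0 < n w := by omega
        have hcc := congrFun (congrFun hphi' ⟨0, hpos⟩) ⟨0, hpos⟩
        simp [Matrix.one_apply] at hcc
    refine ⟨i, l, (κ₀ : ℕ), hlk, κ₀.isLt, hn, ?_⟩
    have hfun : (fun w : LegVertex d => ((n w : ℤ)))
        = fun w => if w.1 = i ∧ l ≤ (w.2 : ℕ) ∧ (w.2 : ℕ) ≤ (κ₀ : ℕ) then 1 else 0 := by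
      funext w
      rw [hn w]
      split_ifs <;> simp
    rw [hfun]
    exact isRealRoot_seg s t d i l (κ₀ : ℕ) hlk hκ₀

end QuiverDefs
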